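/- For every m ∈ ℤ_{≥0}, the function 𝓔_m satisfies lim_{y→∞} 𝓔_m(x+iy) = 12^m uniformly in x ∈ ℝ; that is, for every ε > 0 there exists Y > 0 such that |𝓔_m(x+iy) − 12^m| < ε for all x ∈ ℝ and all y > Y. -/

import Mathlib

noncomputable section

open Complex Real MeasureTheory

/-- The weight-`k` slash of `f` by `σ_{z₀}`, as a function on the unit disc. -/
def slashDisc (k : ℕ) (z₀ : ℂ) (f : ℂ → ℂ) (w : ℂ) : ℂ :=
  (2 * Complex.I * (z₀.im : ℂ)) ^ (k / 2) * (1 - w) ^ (-(k : ℤ)) *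
    f ((z₀ - (starRingEnd ℂ) z₀ * w) / (1 - w))

/-- The `n`-th Fourier (normalized Taylor) coefficient of `f` at `z₀`, in weight `k`. -/
def fourierCoeffAt (k : ℕ) (z₀ : ℂ) (f : ℂ → ℂ) (n : ℕ) : ℂ :=
  iteratedDeriv n (slashDisc k z₀ f) 0 / (n.factorial : ℂ)

/-- Holomorphic cusp form of weight `k` for `SL(2,ℤ)`. -/
def IsCuspForm (k : ℕ) (f : ℂ → ℂ) : Prop :=
  (∀ z : ℂ, 0 < z.im → DifferentiableAt ℂ f z) ∧
  (∀ γ : Matrix.SpecialLinearGroup (Fin 2) ℤ, ∀ z : ℂ, 0 < z.im →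
      f ((((γ : Matrix (Fin 2) (Fin 2) ℤ) 0 0 : ℂ) * z + ((γ : Matrix (Fin 2) (Fin 2) ℤ) 0 1 : ℂ)) /
          (((γ : Matrix (Fin 2) (Fin 2) ℤ) 1 0 : ℂ) * z + ((γ : Matrix (Fin 2) (Fin 2) ℤ) 1 1 : ℂ)))
        = (((γ : Matrix (Fin 2) (Fin 2) ℤ) 1 0 : ℂ) * z +
            ((γ : Matrix (Fin 2) (Fin 2) ℤ) 1 1 : ℂ)) ^ k * f z) ∧
  (∀ ε : ℝ, 0 < ε → ∃ Y : ℝ, ∀ x y : ℝ, Y < y → ‖f (x + y * Complex.I)‖ < ε)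

/-- Ramanujan's Delta function. -/
def Delta (z : ℂ) : ℂ :=
  Complex.exp (2 * π * Complex.I * z) *
    ∏' n : ℕ, (1 - Complex.exp (2 * π * Complex.I * (n + 1) * z)) ^ 24

def E2star (z : ℂ) : ℂ :=
  1 - 24 * ∑' n : ℕ, (ArithmeticFunction.sigma 1 (n + 1) : ℂ) *
      Complex.exp (2 * π * Complex.I * (n + 1) * z) - 3 / (π * z.im)

def E4 (z : ℂ) : ℂ :=
  1 + 240 * ∑' n : ℕ, (ArithmeticFunction.sigma 3 (n + 1) : ℂ) *
      Complex.exp (2 * π * Complex.I * (n + 1) * z)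

def E6 (z : ℂ) : ℂ :=
  1 - 504 * ∑' n : ℕ, (ArithmeticFunction.sigma 5 (n + 1) : ℂ) *
      Complex.exp (2 * π * Complex.I * (n + 1) * z)

/-- The polynomials 𝓑ₙ ∈ ℤ[Q,R]; `X 0` is `Q = E₄`, `X 1` is `R = E₆`. -/
def Bpoly : ℕ → MvPolynomial (Fin 2) ℤ
  | 0 => 1
  | 1 => 0
  | (n + 2) =>
      -4 * MvPolynomial.X 1 * MvPolynomial.pderiv 0 (Bpoly (n + 1))
        - 6 * MvPolynomial.X 0 ^ 2 * MvPolynomial.pderiv 1 (Bpoly (n + 1))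
        - MvPolynomial.C (((n : ℤ) + 1) * ((n : ℤ) + 12)) * MvPolynomial.X 0 * Bpoly n

/-- The polynomials pₙ(t). -/
def ppoly : ℕ → Polynomial ℤ
  | 0 => 1
  | 1 => 0
  | (n + 2) =>
      Polynomial.C (-2 * ((n : ℤ) + 1)) * Polynomial.X * ppoly (n + 1)
        + 6 * (Polynomial.X ^ 2 - 1) * Polynomial.derivative (ppoly (n + 1))
        - Polynomial.C (((n : ℤ) + 1) * ((n : ℤ) + 12)) * ppoly n

/-- The polynomials qₙ(t). -/
def qpoly : ℕ → Polynomial ℤ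
  | 0 => 1
  | 1 => 0
  | (n + 2) =>
      Polynomial.C (-2 * ((n : ℤ) + 1)) * Polynomial.X ^ 2 * qpoly (n + 1)
        + 4 * (Polynomial.X ^ 3 - 1) * Polynomial.derivative (qpoly (n + 1))
        - Polynomial.C (((n : ℤ) + 1) * ((n : ℤ) + 12)) * Polynomial.X * qpoly n

/-- The general recursion q₀ = 1, q₁ = a₁,
`q_{n+1} = (a₁ + n a₂) q_n + a₃ q_n' + n(n+11) a₄ q_{n-1}`. -/
def qrec {R : Type*} [CommRing R] (a₁ a₂ a₃ a₄ : Polynomial R) : ℕ → Polynomial R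
  | 0 => 1
  | 1 => a₁
  | (n + 2) =>
      (a₁ + ((n : Polynomial R) + 1) * a₂) * qrec a₁ a₂ a₃ a₄ (n + 1)
        + a₃ * Polynomial.derivative (qrec a₁ a₂ a₃ a₄ (n + 1))
        + ((n : Polynomial R) + 1) * ((n : Polynomial R) + 12) * a₄ * qrec a₁ a₂ a₃ a₄ n

/-- Maass raising operator of weight `w`. -/
def raise (w : ℤ) (g : ℂ → ℂ) : ℂ → ℂ := fun z =>
  1 / (2 * π * Complex.I) * deriv g z - (w : ℂ) / (4 * π * z.im) * g z

/-- `raiseIter k m = ∂_{k+2m-2} ∘ ⋯ ∘ ∂_{k+2} ∘ ∂_k`. -/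
def raiseIter (k : ℕ) : ℕ → (ℂ → ℂ) → (ℂ → ℂ)
  | 0 => fun g => g
  | (m + 1) => fun g => raise ((k : ℤ) + 2 * m) (raiseIter k m g)

/-- Möbius action of `SL(2,ℤ)` on `ℂ`. -/
def moebius (γ : Matrix.SpecialLinearGroup (Fin 2) ℤ) (z : ℂ) : ℂ :=
  (((γ : Matrix (Fin 2) (Fin 2) ℤ) 0 0 : ℂ) * z + ((γ : Matrix (Fin 2) (Fin 2) ℤ) 0 1 : ℂ)) /
    (((γ : Matrix (Fin 2) (Fin 2) ℤ) 1 0 : ℂ) * z + ((γ : Matrix (Fin 2) (Fin 2) ℤ) 1 1 : ℂ))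

/-- Order of the stabilizer of `z₀` in `PSL(2,ℤ)`. -/
def stabOrder (z₀ : ℂ) : ℕ :=
  Set.ncard {γ : Matrix.SpecialLinearGroup (Fin 2) ℤ | moebius γ z₀ = z₀} / 2

/-- The CM point attached to a fundamental discriminant `D < 0`.  -/
def cmPoint (D : ℤ) : ℂ :=
  if D % 2 = 0 then Complex.I * (Real.sqrt (|D| : ℝ) : ℂ) / 2
  else (1 + Complex.I * (Real.sqrt (|D| : ℝ) : ℂ)) / 2

/-- A term of the weight-12 elliptic Poincaré series attached to `z₀`. -/
def poincareTerm (z₀ : ℂ) (m : ℕ) (γ : Matrix.SpecialLinearGroup (Fin 2) ℤ) (z : ℂ) : ℂ :=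
  (2 * Complex.I * (z₀.im : ℂ)) ^ 6 * (moebius γ z - z₀) ^ m /
    ((moebius γ z - (starRingEnd ℂ) z₀) ^ (m + 12) *
      (((γ : Matrix (Fin 2) (Fin 2) ℤ) 1 0 : ℂ) * z + ((γ : Matrix (Fin 2) (Fin 2) ℤ) 1 1 : ℂ)) ^ 12)

/-- `𝓔_m(z)`. -/
def Ecal (m : ℕ) (z : ℂ) : ℂ :=
  ∑ r ∈ Finset.range (m + 1),
    ((m.factorial / r.factorial : ℕ) : ℂ) * (Nat.choose (m + 11) (r + 11) : ℂ) *
      E2star z ^ (m - r) * MvPolynomial.aeval ![E4 z, E6 z] (Bpoly r)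


section Aux

open Polynomial

def phiG : MvPolynomial (Fin 2) ℤ →ₐ[ℤ] Polynomial ℤ :=
  MvPolynomial.aeval ![X ^ 2, X ^ 3]

def Gp (n : ℕ) : Polynomial ℤ := phiG (Bpoly n)

lemma phiG_chain (p : MvPolynomial (Fin 2) ℤ) :
    derivative (phiG p) = C 2 * X * phiG (MvPolynomial.pderiv 0 p)
      + C 3 * X ^ 2 * phiG (MvPolynomial.pderiv 1 p) := by
  induction p using MvPolynomial.induction_on with
  | C a => simp [phiG]
  | add p q hp hq => simp [map_add, hp, hq]; ring
  | mul_X p i hp =>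
      simp only [phiG] at hp ⊢
      fin_cases i <;>
        simp [MvPolynomial.pderiv_mul, map_add, map_mul, derivative_mul, hp] <;> ring

lemma Gp_zero : Gp 0 = 1 := by simp [Gp, Bpoly, phiG]
lemma Gp_one : Gp 1 = 0 := by simp [Gp, Bpoly, phiG]

lemma Gp_rec (n : ℕ) :
    C (-2) * X ^ 2 * derivative (Gp (n + 1)) =
      Gp (n + 2) + C (((n : ℤ) + 1) * ((n : ℤ) + 12)) * X ^ 2 * Gp n := by
  rw [Gp, phiG_chain]
  show _ = phiG (Bpoly (n + 2)) + _
  rw [show Bpoly (n + 2) = -4 * MvPolynomial.X 1 * MvPolynomial.pderiv 0 (Bpoly (n + 1))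
        - 6 * MvPolynomial.X 0 ^ 2 * MvPolynomial.pderiv 1 (Bpoly (n + 1))
        - MvPolynomial.C (((n : ℤ) + 1) * ((n : ℤ) + 12)) * MvPolynomial.X 0 * Bpoly n from rfl]
  simp only [map_sub, map_mul, map_pow, map_neg, map_ofNat]
  have h0 : phiG (MvPolynomial.X 0) = X ^ 2 := by simp [phiG]
  have h1 : phiG (MvPolynomial.X 1) = X ^ 3 := by simp [phiG]
  have hC : ∀ a : ℤ, phiG (MvPolynomial.C a) = C a := fun a => by simp [phiG]
  rw [h0, h1]
  simp only [hC, C_mul, Gp]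
  ring

/-- uniform version: for all `r`, `-2X² (Gp r)' = Gp (r+1) + r(r+11) X² Gp (r-1)`. -/
lemma Gp_rec' (r : ℕ) :
    C (-2) * X ^ 2 * derivative (Gp r) =
      Gp (r + 1) + C ((r : ℤ) * ((r : ℤ) + 11)) * X ^ 2 * Gp (r - 1) := by
  cases r with
  | zero => simp [Gp_zero, Gp_one]
  | succ n =>
      have := Gp_rec n
      simpa [Nat.cast_succ, add_assoc] using this

def ccoef (m r : ℕ) : ℕ := m.factorial / r.factorial * (m + 11).choose (r + 11)

lemma ccoef_of_gt {m r : ℕ} (h : m < r) : ccoef m r = 0 := by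
  unfold ccoef
  rw [Nat.choose_eq_zero_of_lt (by omega)]
  simp

lemma ccoef_self (m : ℕ) : ccoef m m = 1 := by
  unfold ccoef
  rw [Nat.div_self (Nat.factorial_pos m), Nat.choose_self]

lemma ccoef_cast {m r : ℕ} (h : r ≤ m) :
    (ccoef m r : ℚ) = (m.factorial : ℚ) / (r.factorial : ℚ) *
      ((m + 11).factorial / ((r + 11).factorial * (m - r).factorial)) := by
  unfold ccoef
  push_cast [Nat.cast_div (Nat.factorial_dvd_factorial h)
      (by positivity : ((r.factorial : ℚ)) ≠ 0),
    Nat.cast_choose ℚ (by omega : r + 11 ≤ m + 11),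
    show m + 11 - (r + 11) = m - r by omega]
  rfl

set_option maxHeartbeats 1000000 in
lemma ccoef_rec (m s : ℕ) :
    ccoef (m + 1) s = (2 * s + 12) * ccoef m s +
      (if s = 0 then 0 else ccoef m (s - 1)) + (s + 1) * (s + 12) * ccoef m (s + 1) := by
  have fact_ne : ∀ n : ℕ, ((n.factorial : ℚ)) ≠ 0 := fun n => by positivity
  rcases Nat.lt_or_ge (m + 1) s with h | h
  · -- s ≥ m + 2 : everything vanishes
    rw [ccoef_of_gt (by omega), ccoef_of_gt (by omega), ccoef_of_gt (by omega),
      ccoef_of_gt (by omega), if_neg (show ¬ s = 0 by omega)]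
    simp
  rcases Nat.eq_or_lt_of_le h with rfl | h
  · -- s = m + 1
    rw [ccoef_self, ccoef_of_gt (show m < m + 1 by omega),
      ccoef_of_gt (show m < m + 1 + 1 by omega), if_neg (Nat.succ_ne_zero m),
      show m + 1 - 1 = m by omega, ccoef_self]
    ring
  -- now s ≤ m
  have hsm : s ≤ m := by omega
  rcases Nat.eq_or_lt_of_le hsm with rfl | hlt
  · -- s = m
    rcases Nat.eq_zero_or_pos s with rfl | hs
    · -- m = s = 0
      decide
    · obtain ⟨t, rfl⟩ : ∃ t, s = t + 1 := ⟨s - 1, by omega⟩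
      rw [if_neg (Nat.succ_ne_zero t), show t + 1 - 1 = t by omega]
      have goal : (ccoef (t + 2) (t + 1) : ℚ) =
          (2 * (t + 1) + 12) * ccoef (t + 1) (t + 1) + ccoef (t + 1) t +
            (t + 1 + 1) * (t + 1 + 12) * ccoef (t + 1) (t + 1 + 1) := by
        rw [ccoef_self, ccoef_of_gt (show t + 1 < t + 1 + 1 by omega)]
        rw [ccoef_cast (by omega : t + 1 ≤ t + 2), ccoef_cast (by omega : t ≤ t + 1),
          show t + 2 - (t + 1) = 1 by omega, show t + 1 - t = 1 by omega,
          show (t+2).factorial = (t+2) * (t+1).factorial by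
            rw [show t+2 = (t+1)+1 by omega, Nat.factorial_succ],
          show (t+1).factorial = (t+1) * t.factorial by rw [Nat.factorial_succ],
          show (t+2+11).factorial = (t+13) * (t+12).factorial by
            rw [show t+2+11 = (t+12)+1 by omega, Nat.factorial_succ],
          show (t+1+11).factorial = (t+12) * (t+11).factorial by
            rw [show t+1+11 = (t+11)+1 by omega, Nat.factorial_succ]]
        push_cast
        field_simp
        ring
      exact_mod_cast goal
  · -- s + 1 ≤ m : generic case
    obtain ⟨j, rfl⟩ : ∃ j, m = s + j + 1 := ⟨m - s - 1, by omega⟩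
    have key : (ccoef (s + j + 2) s : ℚ) =
        (2 * s + 12) * ccoef (s + j + 1) s +
          (if s = 0 then 0 else (ccoef (s + j + 1) (s - 1) : ℚ)) +
          (s + 1) * (s + 12) * ccoef (s + j + 1) (s + 1) := by
      have e1 : ((s+j+2).factorial : ℚ) = (s+j+2) * (s+j+1).factorial := by
        rw [show s+j+2 = (s+j+1)+1 by omega, Nat.factorial_succ]; push_cast; ring
      have e2 : ((s+j+2+11).factorial : ℚ) = (s+j+13) * (s+j+1+11).factorial := by
        rw [show s+j+2+11 = (s+j+1+11)+1 by omega, Nat.factorial_succ]; push_cast; ring_nf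
      have e3 : ((s+1).factorial : ℚ) = (s+1) * s.factorial := by
        rw [Nat.factorial_succ]; push_cast; ring
      have e4 : ((s+1+11).factorial : ℚ) = (s+12) * (s+11).factorial := by
        rw [show s+1+11 = (s+11)+1 by omega, Nat.factorial_succ]; push_cast; ring_nf
      have e5 : ((j+1).factorial : ℚ) = (j+1) * j.factorial := by
        rw [Nat.factorial_succ]; push_cast; ring
      have e6 : ((j+2).factorial : ℚ) = (j+2) * ((j+1) * j.factorial) := by
        rw [show j+2 = (j+1)+1 by omega, Nat.factorial_succ, Nat.factorial_succ]
        push_cast; ring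
      rcases Nat.eq_zero_or_pos s with rfl | hs
      · rw [if_pos rfl, ccoef_cast (by omega : 0 ≤ 0 + j + 2),
          ccoef_cast (by omega : 0 ≤ 0 + j + 1), ccoef_cast (by omega : 0 + 1 ≤ 0 + j + 1),
          show 0 + j + 2 - 0 = j + 2 by omega, show 0 + j + 1 - 0 = j + 1 by omega,
          show 0 + j + 1 - (0 + 1) = j by omega]
        simp only [show (0:ℕ)+j+2 = j+2 by omega, show (0:ℕ)+j+1 = j+1 by omega,
          show (0:ℕ)+j+2+11 = j+13 by omega, show (0:ℕ)+j+1+11 = j+12 by omega,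
          show (0:ℕ)+1 = 1 by omega, show (0:ℕ)+1+11 = 12 by omega]
        have f1 : ((j+2).factorial : ℚ) = (j+2) * ((j+1) * j.factorial) := e6
        have f2 : ((j+1).factorial : ℚ) = (j+1) * j.factorial := e5
        have f3 : ((j+13).factorial : ℚ) = (j+13) * (j+12).factorial := by
          rw [show j+13 = (j+12)+1 by omega, Nat.factorial_succ]; push_cast; ring
        rw [f1, f2, f3]
        norm_num [Nat.factorial]
        field_simp
        ring
      · obtain ⟨t, rfl⟩ : ∃ t, s = t + 1 := ⟨s - 1, by omega⟩
        rw [if_neg (Nat.succ_ne_zero t), show t + 1 - 1 = t by omega,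
          ccoef_cast (by omega : t + 1 ≤ t + 1 + j + 2),
          ccoef_cast (by omega : t + 1 ≤ t + 1 + j + 1),
          ccoef_cast (by omega : t ≤ t + 1 + j + 1),
          ccoef_cast (by omega : t + 1 + 1 ≤ t + 1 + j + 1),
          show t + 1 + j + 2 - (t + 1) = j + 2 by omega,
          show t + 1 + j + 1 - (t + 1) = j + 1 by omega,
          show t + 1 + j + 1 - t = j + 1 + 1 by omega,
          show t + 1 + j + 1 - (t + 1 + 1) = j by omega]
        have g1 : ((t+1+j+2).factorial : ℚ) = (t+j+3) * (t+1+j+1).factorial := by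
          rw [show t+1+j+2 = (t+1+j+1)+1 by omega, Nat.factorial_succ]; push_cast; ring_nf
        have g2 : ((t+1+j+2+11).factorial : ℚ) = (t+j+14) * (t+1+j+1+11).factorial := by
          rw [show t+1+j+2+11 = (t+1+j+1+11)+1 by omega, Nat.factorial_succ]
          push_cast; ring_nf
        have g3 : ((t+1).factorial : ℚ) = (t+1) * t.factorial := by
          rw [Nat.factorial_succ]; push_cast; ring
        have g4 : ((t+1+11).factorial : ℚ) = (t+12) * (t+11).factorial := by
          rw [show t+1+11 = (t+11)+1 by omega, Nat.factorial_succ]; push_cast; ring_nf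
        have g6 : ((t+1+1).factorial : ℚ) = (t+2) * ((t+1) * t.factorial) := by
          rw [show t+1+1 = (t+1)+1 by omega, Nat.factorial_succ, Nat.factorial_succ]
          push_cast; ring
        have g7 : ((t+1+1+11).factorial : ℚ) = (t+13) * ((t+12) * (t+11).factorial) := by
          rw [show t+1+1+11 = (t+12)+1 by omega, Nat.factorial_succ,
            show t+12 = (t+11)+1 by omega, Nat.factorial_succ]
          push_cast; ring
        have g8 : ((j+1+1).factorial : ℚ) = (j+2) * ((j+1) * j.factorial) := by
          rw [show j+1+1 = (j+1)+1 by omega, Nat.factorial_succ, Nat.factorial_succ]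
          push_cast; ring
        rw [g1, g2, g3, g4, g6, g7, e5, g8]
        field_simp
        push_cast
        ring
    rcases Nat.eq_zero_or_pos s with rfl | hs
    · rw [if_pos rfl] at key ⊢
      exact_mod_cast key
    · rw [if_neg (by omega)] at key ⊢
      exact_mod_cast key

def Hpoly (m : ℕ) : Polynomial ℤ :=
  ∑ r ∈ Finset.range (m + 1), C ((ccoef m r : ℤ)) * X ^ (m - r) * Gp r

set_option maxHeartbeats 1000000 in
lemma Hstep (m : ℕ) :
    Hpoly (m + 1) = C (2 * (m : ℤ) + 12) * X * Hpoly m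
      + C (-2) * X ^ 2 * derivative (Hpoly m) := by
  have hL : Hpoly (m + 1) = ∑ s ∈ Finset.range (m + 2),
      (C (((2 * s + 12) * ccoef m s : ℕ) : ℤ) * X ^ (m + 1 - s) * Gp s
        + (if s = 0 then 0 else C ((ccoef m (s - 1) : ℤ)) * X ^ (m + 1 - s) * Gp s)
        + C ((((s + 1) * (s + 12) * ccoef m (s + 1) : ℕ)) : ℤ) * X ^ (m + 1 - s) * Gp s) := by
    unfold Hpoly
    refine Finset.sum_congr rfl fun s _ => ?_
    rw [ccoef_rec m s]
    by_cases hs : s = 0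
    · subst hs
      simp only [if_pos rfl]
      try simp only [map_mul, map_add, map_neg, map_ofNat, C_eq_natCast, C_1, C_0]
      push_cast
      ring
    · rw [if_neg hs, if_neg hs]
      try simp only [map_mul, map_add, map_neg, map_ofNat, C_eq_natCast, C_1, C_0]
      push_cast
      ring
  have hR : C (2 * (m : ℤ) + 12) * X * Hpoly m + C (-2) * X ^ 2 * derivative (Hpoly m)
      = ∑ r ∈ Finset.range (m + 1),
          (C (((2 * r + 12) * ccoef m r : ℕ) : ℤ) * X ^ (m + 1 - r) * Gp r
            + C ((ccoef m r : ℤ)) * X ^ (m - r) * Gp (r + 1)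
            + C ((ccoef m r : ℤ) * ((r : ℤ) * ((r : ℤ) + 11))) * X ^ (m + 2 - r) * Gp (r - 1)) := by
    unfold Hpoly
    rw [derivative_sum, Finset.mul_sum, Finset.mul_sum, ← Finset.sum_add_distrib]
    refine Finset.sum_congr rfl fun r hr => ?_
    have hrm : r ≤ m := Nat.lt_succ_iff.mp (Finset.mem_range.mp hr)
    have hder : derivative (C ((ccoef m r : ℤ)) * X ^ (m - r) * Gp r)
        = C ((ccoef m r : ℤ)) * (C ((m - r : ℕ) : ℤ) * X ^ (m - r - 1)) * Gp r
          + C ((ccoef m r : ℤ)) * X ^ (m - r) * derivative (Gp r) := by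
      rw [derivative_mul, derivative_mul, derivative_C, derivative_X_pow]
      ring
    rw [hder]
    have hGr := Gp_rec' r
    rcases Nat.eq_or_lt_of_le hrm with rfl | hlt
    · -- r = m
      simp only [Nat.sub_self, show r + 1 - r = 1 by omega, show r + 2 - r = 2 by omega,
        Nat.cast_zero, C_0, pow_zero]
      try simp only [map_mul, map_add, map_neg, map_ofNat, C_eq_natCast, C_1, C_0] at hGr ⊢
      push_cast at hGr ⊢
      linear_combination ((ccoef r r : Polynomial ℤ)) * hGr
    · -- r < m
      obtain ⟨k, rfl⟩ : ∃ k, m = r + (k + 1) := ⟨m - r - 1, by omega⟩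
      simp only [show r + (k + 1) - r = k + 1 by omega,
        show r + (k + 1) - r - 1 = k by omega,
        show r + (k + 1) + 1 - r = k + 2 by omega,
        show r + (k + 1) + 2 - r = k + 3 by omega]
      try simp only [map_mul, map_add, map_neg, map_ofNat, C_eq_natCast, C_1, C_0] at hGr ⊢
      push_cast at hGr ⊢
      linear_combination ((ccoef (r + (k + 1)) r : Polynomial ℤ) * X ^ (k + 1)) * hGr
  rw [hL, hR]
  clear hL hR
  -- split both sides into three sums
  rw [Finset.sum_add_distrib, Finset.sum_add_distrib, Finset.sum_add_distrib,
    Finset.sum_add_distrib]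
  refine congrArg₂ (· + ·) ?_ ?_
  · refine congrArg₂ (· + ·) ?_ ?_
    · -- first components
      rw [Finset.sum_range_succ]
      rw [ccoef_of_gt (show m < m + 1 by omega)]
      simp
    · -- second components
      rw [Finset.sum_range_succ'
        (fun s => if s = 0 then 0 else C ((ccoef m (s - 1) : ℤ)) * X ^ (m + 1 - s) * Gp s)
        (m + 1)]
      simp only [reduceIte, add_zero]
      refine Finset.sum_congr rfl fun i _ => ?_
      rw [if_neg (Nat.succ_ne_zero i), show i + 1 - 1 = i by omega,
        show m + 1 - (i + 1) = m - i by omega]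
  · -- third components
    have e1 : ∑ r ∈ Finset.range (m + 1),
        C ((ccoef m r : ℤ) * ((r : ℤ) * ((r : ℤ) + 11))) * X ^ (m + 2 - r) * Gp (r - 1)
        = ∑ i ∈ Finset.range m,
            C ((ccoef m (i + 1) : ℤ) * (((i : ℤ) + 1) * (((i : ℤ) + 1) + 11))) *
              X ^ (m + 2 - (i + 1)) * Gp i := by
      rw [Finset.sum_range_succ'
        (fun r => C ((ccoef m r : ℤ) * ((r : ℤ) * ((r : ℤ) + 11))) * X ^ (m + 2 - r) * Gp (r - 1))
        m]
      simp
    have e2 : ∑ s ∈ Finset.range (m + 2),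
        C ((((s + 1) * (s + 12) * ccoef m (s + 1) : ℕ)) : ℤ) * X ^ (m + 1 - s) * Gp s
        = ∑ s ∈ Finset.range m,
            C ((((s + 1) * (s + 12) * ccoef m (s + 1) : ℕ)) : ℤ) * X ^ (m + 1 - s) * Gp s := by
      rw [Finset.sum_range_succ
        (fun s => C ((((s + 1) * (s + 12) * ccoef m (s + 1) : ℕ)) : ℤ) * X ^ (m + 1 - s) * Gp s)
        (m + 1),
        Finset.sum_range_succ
        (fun s => C ((((s + 1) * (s + 12) * ccoef m (s + 1) : ℕ)) : ℤ) * X ^ (m + 1 - s) * Gp s)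
        m,
        ccoef_of_gt (show m < m + 1 by omega), ccoef_of_gt (show m < m + 1 + 1 by omega)]
      simp
    rw [e1, e2]
    refine Finset.sum_congr rfl fun i _ => ?_
    rw [show m + 2 - (i + 1) = m + 1 - i by omega]
    try simp only [map_mul, map_add, map_neg, map_ofNat, C_eq_natCast, C_1, C_0]
    push_cast
    ring

lemma Hpoly_eq (m : ℕ) : Hpoly m = C ((12 : ℤ) ^ m) * X ^ m := by
  induction m with
  | zero => rw [Hpoly, Finset.sum_range_one, ccoef_self, Gp_zero]; simp only [Nat.cast_one, Nat.sub_self, pow_zero, mul_one]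
  | succ k ih =>
      rw [Hstep, ih, derivative_C_mul, derivative_X_pow]
      cases k with
      | zero => simp
      | succ j =>
          rw [show j + 1 - 1 = j by omega]
          simp only [map_pow, map_ofNat, map_mul, map_add, map_neg, C_eq_natCast, C_1]
          push_cast
          ring

lemma aeval_Gp (r : ℕ) :
    (Polynomial.aeval (1 : ℂ)) (Gp r) = MvPolynomial.aeval ![(1 : ℂ), 1] (Bpoly r) := by
  rw [Gp, phiG, MvPolynomial.comp_aeval_apply]
  have h : (fun i => (Polynomial.aeval (1 : ℂ)) (![(X : Polynomial ℤ) ^ 2, X ^ 3] i))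
      = ![1, 1] := by
    funext i; fin_cases i <;> simp
  rw [h]

lemma Bsum_eq (m : ℕ) :
    ∑ r ∈ Finset.range (m + 1), ((m.factorial / r.factorial : ℕ) : ℂ) *
      ((m + 11).choose (r + 11) : ℂ) * MvPolynomial.aeval ![(1 : ℂ), 1] (Bpoly r)
      = 12 ^ m := by
  have := congrArg (Polynomial.aeval (1 : ℂ)) (Hpoly_eq m)
  rw [Hpoly, map_sum] at this
  simp only [map_mul, map_pow, Polynomial.aeval_X, Polynomial.aeval_C, one_pow, mul_one] at this
  calc ∑ r ∈ Finset.range (m + 1), ((m.factorial / r.factorial : ℕ) : ℂ) *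
        ((m + 11).choose (r + 11) : ℂ) * MvPolynomial.aeval ![(1 : ℂ), 1] (Bpoly r)
      = ∑ r ∈ Finset.range (m + 1), (algebraMap ℤ ℂ) ((ccoef m r : ℤ)) *
          (Polynomial.aeval (1 : ℂ)) (Gp r) := by
        refine Finset.sum_congr rfl fun r _ => ?_
        rw [aeval_Gp]
        simp only [algebraMap_int_eq, eq_intCast, Int.cast_natCast, Int.cast_mul, ccoef, Nat.cast_mul]
        try ring
    _ = (algebraMap ℤ ℂ) 12 ^ m := this
    _ = 12 ^ m := by norm_num

end Aux

-- analytic lemmas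
section Ana

lemma sigma_le (k n : ℕ) : (ArithmeticFunction.sigma k (n + 1) : ℝ) ≤ ((n : ℝ) + 2) ^ (k + 1) := by
  have h1 : ArithmeticFunction.sigma k (n + 1) ≤ (n + 2) ^ (k + 1) := by
    rw [ArithmeticFunction.sigma_apply]
    calc ∑ d ∈ (n + 1).divisors, d ^ k
        ≤ (n + 1).divisors.card * (n + 1) ^ k := by
          apply Finset.sum_le_card_nsmul
          intro d hd
          exact Nat.pow_le_pow_left (Nat.divisor_le hd) k
      _ ≤ (n + 1) * (n + 1) ^ k := by
          gcongr
          calc (n + 1).divisors.card ≤ (Finset.Icc 1 (n + 1)).card := by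
                apply Finset.card_le_card
                intro d hd
                rw [Finset.mem_Icc]
                exact ⟨Nat.pos_of_mem_divisors hd, Nat.divisor_le hd⟩
            _ = n + 1 := by rw [Nat.card_Icc]; omega
      _ = (n + 1) ^ (k + 1) := by ring
      _ ≤ (n + 2) ^ (k + 1) := Nat.pow_le_pow_left (by omega) _
  calc (ArithmeticFunction.sigma k (n + 1) : ℝ) ≤ (((n + 2) ^ (k + 1) : ℕ) : ℝ) := by
        exact_mod_cast h1
    _ = ((n : ℝ) + 2) ^ (k + 1) := by push_cast; ring

set_option maxHeartbeats 1000000 in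
lemma summable_aux (k : ℕ) :
    Summable (fun n : ℕ => ((n : ℝ) + 2) ^ (k + 1) * Real.exp (-(2 * π) * n)) := by
  set r : ℝ := Real.exp (-(2 * π)) with hr
  have hr0 : 0 < r := Real.exp_pos _
  have hr1 : r < 1 := by
    rw [hr, Real.exp_lt_one_iff]
    nlinarith [Real.pi_pos]
  have hg : Summable (fun n : ℕ => (n : ℝ) ^ (k + 1) * r ^ n) :=
    summable_pow_mul_geometric_of_norm_lt_one (k + 1) (by rwa [Real.norm_eq_abs, abs_of_pos hr0])
  have hg2 : Summable (fun n : ℕ => (((n + 2 : ℕ)) : ℝ) ^ (k + 1) * r ^ (n + 2)) :=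
    (summable_nat_add_iff 2).mpr hg
  have h3 := hg2.mul_left (r ^ 2)⁻¹
  apply h3.congr
  intro n
  have hexp : Real.exp (-(2 * π) * n) = r ^ n := by
    rw [hr, ← Real.exp_nat_mul, mul_comm]
  rw [hexp, pow_add]
  push_cast
  field_simp
  ring

lemma exp_abs_eq (x y : ℝ) (n : ℕ) :
    ‖Complex.exp (2 * π * Complex.I * (n + 1) * ((x : ℂ) + (y : ℂ) * Complex.I))‖
      = Real.exp (-(2 * π * (n + 1) * y)) := by
  rw [Complex.norm_exp]
  congr 1
  have : (2 * (π : ℂ) * Complex.I * ((n : ℂ) + 1) * ((x : ℂ) + (y : ℂ) * Complex.I)) =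
      Complex.I * ((2 * π * (n + 1) * x : ℝ) : ℂ) + ((-(2 * π * (n + 1) * y) : ℝ) : ℂ) := by
    push_cast
    ring_nf
    rw [Complex.I_sq]
    ring
  rw [this]
  simp

lemma series_summable (k : ℕ) (x y : ℝ) (hy : 1 ≤ y) :
    Summable (fun n : ℕ => (ArithmeticFunction.sigma k (n + 1) : ℂ) *
      Complex.exp (2 * π * Complex.I * (n + 1) * ((x : ℂ) + (y : ℂ) * Complex.I))) := by
  apply Summable.of_norm
  apply Summable.of_nonneg_of_le (fun n => norm_nonneg _)
    (f := fun n : ℕ => ((n : ℝ) + 2) ^ (k + 1) * Real.exp (-(2 * π) * n))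
  · intro n
    rw [norm_mul, exp_abs_eq]
    have h1 : ‖(ArithmeticFunction.sigma k (n + 1) : ℂ)‖ ≤ ((n : ℝ) + 2) ^ (k + 1) := by
      rw [Complex.norm_natCast]
      exact sigma_le k n
    have h2 : Real.exp (-(2 * π * (n + 1) * y)) ≤ Real.exp (-(2 * π) * n) := by
      apply Real.exp_le_exp.mpr
      have hny : (0:ℝ) ≤ (n : ℝ) * (y - 1) := mul_nonneg (Nat.cast_nonneg n) (by linarith)
      nlinarith [Real.pi_pos, hny]
    exact mul_le_mul h1 h2 (Real.exp_pos _).le (by positivity)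
  · exact summable_aux k

lemma tsum_bound (k : ℕ) : ∃ A : ℝ, 0 ≤ A ∧ ∀ x y : ℝ, 1 ≤ y →
    ‖∑' n : ℕ, (ArithmeticFunction.sigma k (n + 1) : ℂ) *
        Complex.exp (2 * π * Complex.I * (n + 1) * ((x : ℂ) + (y : ℂ) * Complex.I))‖
      ≤ A * Real.exp (-(2 * π * y)) := by
  refine ⟨∑' n : ℕ, ((n : ℝ) + 2) ^ (k + 1) * Real.exp (-(2 * π) * n),
    tsum_nonneg fun n => by positivity, fun x y hy => ?_⟩
  have hsum := series_summable k x y hy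
  calc ‖∑' n : ℕ, (ArithmeticFunction.sigma k (n + 1) : ℂ) *
        Complex.exp (2 * π * Complex.I * (n + 1) * ((x : ℂ) + (y : ℂ) * Complex.I))‖
      ≤ ∑' n : ℕ, ‖(ArithmeticFunction.sigma k (n + 1) : ℂ) *
          Complex.exp (2 * π * Complex.I * (n + 1) * ((x : ℂ) + (y : ℂ) * Complex.I))‖ := by
        exact norm_tsum_le_tsum_norm hsum.norm
    _ ≤ ∑' n : ℕ, (((n : ℝ) + 2) ^ (k + 1) * Real.exp (-(2 * π) * n)) * Real.exp (-(2 * π * y)) := by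
        apply Summable.tsum_le_tsum _ hsum.norm ((summable_aux k).mul_right _)
        intro n
        rw [norm_mul, exp_abs_eq]
        have h1 : ‖(ArithmeticFunction.sigma k (n + 1) : ℂ)‖
            ≤ ((n : ℝ) + 2) ^ (k + 1) := by
          rw [Complex.norm_natCast]; exact sigma_le k n
        have h2 : Real.exp (-(2 * π * (n + 1) * y)) ≤ Real.exp (-(2 * π) * n) *
            Real.exp (-(2 * π * y)) := by
          rw [← Real.exp_add]
          apply Real.exp_le_exp.mpr
          have hny : (0:ℝ) ≤ (n : ℝ) * (y - 1) := mul_nonneg (Nat.cast_nonneg n) (by linarith)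
          nlinarith [Real.pi_pos, hny]
        calc ‖(ArithmeticFunction.sigma k (n + 1) : ℂ)‖ *
              Real.exp (-(2 * π * (n + 1) * y))
            ≤ (((n : ℝ) + 2) ^ (k + 1)) * (Real.exp (-(2 * π) * n) * Real.exp (-(2 * π * y))) :=
              mul_le_mul h1 h2 (Real.exp_pos _).le (by positivity)
          _ = (((n : ℝ) + 2) ^ (k + 1) * Real.exp (-(2 * π) * n)) * Real.exp (-(2 * π * y)) := by
              ring
    _ = (∑' n : ℕ, ((n : ℝ) + 2) ^ (k + 1) * Real.exp (-(2 * π) * n)) * Real.exp (-(2 * π * y)) := by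
        rw [tsum_mul_right]

end Ana


section Glue

def Pfun (m : ℕ) : ℂ × ℂ × ℂ → ℂ := fun t =>
  ∑ r ∈ Finset.range (m + 1),
    ((m.factorial / r.factorial : ℕ) : ℂ) * (Nat.choose (m + 11) (r + 11) : ℂ) *
      t.1 ^ (m - r) * MvPolynomial.aeval ![t.2.1, t.2.2] (Bpoly r)

lemma cont_aeval2 (p : MvPolynomial (Fin 2) ℤ) :
    Continuous fun w : ℂ × ℂ => MvPolynomial.aeval ![w.1, w.2] p := by
  have h1 : Continuous fun w : ℂ × ℂ => (![w.1, w.2] : Fin 2 → ℂ) := by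
    apply continuous_pi
    intro i
    fin_cases i
    · simpa using continuous_fst
    · simpa using continuous_snd
  have h2 : Continuous fun v : Fin 2 → ℂ =>
      MvPolynomial.eval v (MvPolynomial.map (algebraMap ℤ ℂ) p) :=
    MvPolynomial.continuous_eval _
  exact (h2.comp h1).congr fun w => by
    show MvPolynomial.eval _ (MvPolynomial.map (algebraMap ℤ ℂ) p) = _
    rw [MvPolynomial.eval_map, MvPolynomial.aeval_def]

lemma Pfun_cont (m : ℕ) : Continuous (Pfun m) := by
  apply continuous_finset_sum
  intro r _
  exact ((continuous_const.mul (continuous_fst.pow _))).mul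
    ((cont_aeval2 (Bpoly r)).comp continuous_snd)

lemma Pfun_one (m : ℕ) : Pfun m (1, 1, 1) = 12 ^ m := by
  rw [← Bsum_eq m]
  unfold Pfun
  refine Finset.sum_congr rfl fun r _ => ?_
  simp [mul_assoc]

lemma Ecal_eq_Pfun (m : ℕ) (z : ℂ) : Ecal m z = Pfun m (E2star z, E4 z, E6 z) := rfl

end Glue

/-- `𝓔_m(x+iy) → 12^m` as `y → ∞`, uniformly in `x`. -/
theorem Ecal_tendsto_uniformly (m : ℕ) :
    ∀ ε : ℝ, 0 < ε → ∃ Y : ℝ, 0 < Y ∧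
      ∀ x y : ℝ, Y < y → ‖Ecal m ((x : ℂ) + (y : ℂ) * Complex.I) - 12 ^ m‖ < ε := by
  intro ε hε
  obtain ⟨δ, hδpos, hδ⟩ := Metric.continuousAt_iff.mp ((Pfun_cont m).continuousAt
    (x := ((1 : ℂ), (1 : ℂ), (1 : ℂ)))) ε hε
  obtain ⟨A1, hA1, hB1⟩ := tsum_bound 1
  obtain ⟨A3, hA3, hB3⟩ := tsum_bound 3
  obtain ⟨A5, hA5, hB5⟩ := tsum_bound 5
  set K : ℝ := 24 * A1 + 240 * A3 + 504 * A5 + 1 with hK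
  have hKpos : 0 < K := by positivity
  have t1 : Filter.Tendsto (fun y : ℝ => Real.exp (-(2 * π * y))) Filter.atTop (nhds 0) := by
    have h2 : Filter.Tendsto (fun y : ℝ => 2 * π * y) Filter.atTop Filter.atTop :=
      Filter.Tendsto.const_mul_atTop (by positivity) Filter.tendsto_id
    have := Real.tendsto_exp_neg_atTop_nhds_zero.comp h2
    simpa [Function.comp_def] using this
  have t2 : Filter.Tendsto (fun y : ℝ => 3 / (π * y)) Filter.atTop (nhds 0) := by
    apply Filter.Tendsto.div_atTop (tendsto_const_nhds)
    exact Filter.Tendsto.const_mul_atTop Real.pi_pos Filter.tendsto_id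
  have t3 : Filter.Tendsto (fun y : ℝ => K * Real.exp (-(2 * π * y)) + 3 / (π * y))
      Filter.atTop (nhds 0) := by
    have := (t1.const_mul K).add t2
    simpa using this
  obtain ⟨Y0, hY0⟩ := Filter.eventually_atTop.mp (t3.eventually_lt_const hδpos)
  refine ⟨max Y0 1, by positivity, fun x y hy => ?_⟩
  have hy1 : 1 ≤ y := le_of_lt (lt_of_le_of_lt (le_max_right Y0 1) hy)
  have hy0 : 0 < y := by linarith
  have hbd : K * Real.exp (-(2 * π * y)) + 3 / (π * y) < δ :=
    hY0 y (le_of_lt (lt_of_le_of_lt (le_max_left Y0 1) hy))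
  have hexp0 : 0 < Real.exp (-(2 * π * y)) := Real.exp_pos _
  have h3y : 0 < 3 / (π * y) := by positivity
  have hE4 : ‖E4 ((x : ℂ) + (y : ℂ) * Complex.I) - 1‖
      ≤ 240 * (A3 * Real.exp (-(2 * π * y))) := by
    have he : E4 ((x : ℂ) + (y : ℂ) * Complex.I) - 1 =
        240 * ∑' n : ℕ, (ArithmeticFunction.sigma 3 (n + 1) : ℂ) *
          Complex.exp (2 * π * Complex.I * (n + 1) * ((x : ℂ) + (y : ℂ) * Complex.I)) := by
      rw [E4]; ring
    rw [he, norm_mul, show ‖(240 : ℂ)‖ = 240 by norm_num]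
    have := hB3 x y hy1
    gcongr
  have hE6 : ‖E6 ((x : ℂ) + (y : ℂ) * Complex.I) - 1‖
      ≤ 504 * (A5 * Real.exp (-(2 * π * y))) := by
    have he : E6 ((x : ℂ) + (y : ℂ) * Complex.I) - 1 =
        (-504) * ∑' n : ℕ, (ArithmeticFunction.sigma 5 (n + 1) : ℂ) *
          Complex.exp (2 * π * Complex.I * (n + 1) * ((x : ℂ) + (y : ℂ) * Complex.I)) := by
      rw [E6]; ring
    rw [he, norm_mul, show ‖(-504 : ℂ)‖ = 504 by
      rw [show ((-504 : ℂ)) = ((-504 : ℝ) : ℂ) by norm_num, Complex.norm_real]; norm_num]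
    have := hB5 x y hy1
    gcongr
  have him : (((x : ℂ) + (y : ℂ) * Complex.I)).im = y := by simp
  have hE2 : ‖E2star ((x : ℂ) + (y : ℂ) * Complex.I) - 1‖
      ≤ 24 * (A1 * Real.exp (-(2 * π * y))) + 3 / (π * y) := by
    have he : E2star ((x : ℂ) + (y : ℂ) * Complex.I) - 1 =
        (-24) * (∑' n : ℕ, (ArithmeticFunction.sigma 1 (n + 1) : ℂ) *
          Complex.exp (2 * π * Complex.I * (n + 1) * ((x : ℂ) + (y : ℂ) * Complex.I)))
          + (-(3 / ((π : ℂ) * (y : ℂ)))) := by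
      rw [E2star, him]; ring
    rw [he]
    calc ‖(-24) * (∑' n : ℕ, (ArithmeticFunction.sigma 1 (n + 1) : ℂ) *
          Complex.exp (2 * π * Complex.I * (n + 1) * ((x : ℂ) + (y : ℂ) * Complex.I)))
          + (-(3 / ((π : ℂ) * (y : ℂ))))‖
        ≤ ‖(-24) * (∑' n : ℕ, (ArithmeticFunction.sigma 1 (n + 1) : ℂ) *
            Complex.exp (2 * π * Complex.I * (n + 1) * ((x : ℂ) + (y : ℂ) * Complex.I)))‖
          + ‖-(3 / ((π : ℂ) * (y : ℂ)))‖ := norm_add_le _ _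
      _ ≤ 24 * (A1 * Real.exp (-(2 * π * y))) + 3 / (π * y) := by
          have e1 : ‖-(3 / ((π : ℂ) * (y : ℂ)))‖ = 3 / (π * y) := by
            rw [norm_neg, show ((3 : ℂ) / ((π : ℂ) * (y : ℂ))) = (((3 / (π * y) : ℝ)) : ℂ) by
              push_cast; ring, Complex.norm_real, Real.norm_of_nonneg h3y.le]
          rw [e1, norm_mul, show ‖(-24 : ℂ)‖ = 24 by
            rw [show ((-24 : ℂ)) = ((-24 : ℝ) : ℂ) by norm_num, Complex.norm_real]; norm_num]
          have := hB1 x y hy1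
          gcongr
  have hdist : dist ((E2star ((x : ℂ) + (y : ℂ) * Complex.I),
      E4 ((x : ℂ) + (y : ℂ) * Complex.I), E6 ((x : ℂ) + (y : ℂ) * Complex.I)))
      ((1 : ℂ), (1 : ℂ), (1 : ℂ)) < δ := by
    rw [Prod.dist_eq]
    apply max_lt
    · rw [Complex.dist_eq]
      calc ‖E2star ((x : ℂ) + (y : ℂ) * Complex.I) - 1‖
          ≤ 24 * (A1 * Real.exp (-(2 * π * y))) + 3 / (π * y) := hE2
        _ ≤ K * Real.exp (-(2 * π * y)) + 3 / (π * y) := by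
            rw [hK]; nlinarith
        _ < δ := hbd
    · rw [Prod.dist_eq]
      apply max_lt
      · rw [Complex.dist_eq]
        calc ‖E4 ((x : ℂ) + (y : ℂ) * Complex.I) - 1‖
            ≤ 240 * (A3 * Real.exp (-(2 * π * y))) := hE4
          _ ≤ K * Real.exp (-(2 * π * y)) + 3 / (π * y) := by
              rw [hK]; nlinarith
          _ < δ := hbd
      · rw [Complex.dist_eq]
        calc ‖E6 ((x : ℂ) + (y : ℂ) * Complex.I) - 1‖
            ≤ 504 * (A5 * Real.exp (-(2 * π * y))) := hE6
          _ ≤ K * Real.exp (-(2 * π * y)) + 3 / (π * y) := by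
              rw [hK]; nlinarith
          _ < δ := hbd
  have := hδ hdist
  rw [Pfun_one] at this
  rw [Ecal_eq_Pfun, ← Complex.dist_eq]
  exact this

end
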